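/- There is no operation J₂ on the involutive bisemilattice A of Figure 2 (the Płonka sum over the four-element semilattice {0 < i, j < k = i∨j} with two-element Boolean fibres A_0 = {0,1}, A_i = {0_i, 1_i}, A_j = {0_j, 1_j} and trivial top fibre A_k = {0_k}, with all Płonka homomorphisms surjective) satisfying the identities K9–K12 together with K1–K8; that is, A cannot be expanded to a K-algebra. -/
import Mathlib


/-- The operations of a Bochvar-type algebra ⟨A, ∨, ¬, J₂, 0, 1⟩. -/
class KOps (α : Type*) where
  sup : α → α → α
  neg : α → α
  J : α → α
  zero : α
  one : α

namespace KOps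

variable {α : Type*} [KOps α]

/-- The meet, defined à la De Morgan: x ∧ y := ¬(¬x ∨ ¬y). -/
def meet (x y : α) : α := neg (sup (neg x) (neg y))

end KOps

open KOps

/-- A K-algebra: an algebra satisfying the identities K1–K12 axiomatising
the variety generated by Bochvar algebras. (K5 holds by definition of `meet`.) -/
class KAlgebra (α : Type*) [KOps α] : Prop where
  K1 : ∀ x : α, sup x x = x
  K2 : ∀ x y : α, sup x y = sup y x
  K3 : ∀ x y z : α, sup (sup x y) z = sup x (sup y z)
  K4 : ∀ x : α, neg (neg x) = x
  K5 : ∀ x y : α, meet x y = neg (sup (neg x) (neg y))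
  K6 : ∀ x y : α, meet x (sup (neg x) y) = meet x y
  K7 : ∀ x : α, sup zero x = x
  K8 : (one : α) = neg zero
  K9 : ∀ x : α, sup (J x) (neg (J x)) = one
  K10 : ∀ x y : α, sup x (J y) = sup x (J (sup x y))
  K11 : ∀ x : α, meet x (J x) = x
  K12 : ∀ x : α, J (meet x (neg x)) = zero

/-- The seven-element involutive bisemilattice of Figure 2: the Płonka sum over
the semilattice {0 < i, j < k = i ∨ j} with two-element Boolean fibres
A₀ = {z, o}, Aᵢ = {zi, oi}, Aⱼ = {zj, oj} and trivial top fibre A_k = {zk}. -/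
inductive Fig : Type
  | z | o | zi | oi | zj | oj | zk
deriving DecidableEq

namespace Fig

/-- The index of the fibre of an element (0 = bottom, 1 = i, 2 = j, 3 = k). -/
def fib : Fig → ℕ
  | z => 0 | o => 0 | zi => 1 | oi => 1 | zj => 2 | oj => 2 | zk => 3

/-- The join in the index semilattice {0 < 1, 2 < 3}. -/
def fjoin (a b : ℕ) : ℕ := if a = b then a else if a = 0 then b else if b = 0 then a else 3

/-- The Boolean value of an element within its fibre. -/
def val : Fig → Bool
  | o => true | oi => true | oj => true | _ => false

/-- The element of the fibre with index `n` and Boolean value `v`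
(i.e. the image under the Płonka homomorphisms). -/
def mk' : ℕ → Bool → Fig
  | 0, false => z | 0, true => o
  | 1, false => zi | 1, true => oi
  | 2, false => zj | 2, true => oj
  | _, _ => zk

/-- The Płonka sum join: project both arguments into the join fibre
(along the unique surjective homomorphisms) and take the join there. -/
def fsup (x y : Fig) : Fig := mk' (fjoin (fib x) (fib y)) (val x || val y)

/-- Negation: swap the two elements of each two-element fibre, fix zk. -/
def fneg (x : Fig) : Fig := mk' (fib x) (!val x)

end Fig

/-- The involutive bisemilattice of Figure 2 cannot be expanded to a K-algebra:
no operation J₂ on it satisfies the identities K1–K12. -/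
theorem stmt19 : ¬ ∃ J : Fig → Fig,
    @KAlgebra Fig { sup := Fig.fsup, neg := Fig.fneg, J := J,
                    zero := Fig.z, one := Fig.o } := by
  rintro ⟨J, h⟩
  have h12 : J Fig.zk = Fig.z := h.K12 Fig.zk
  have h11 : Fig.fneg (Fig.fsup Fig.zj (Fig.fneg (J Fig.oj))) = Fig.oj := h.K11 Fig.oj
  have h9 : Fig.fsup (J Fig.oj) (Fig.fneg (J Fig.oj)) = Fig.o := h.K9 Fig.oj
  have h10 : Fig.fsup Fig.zi (J Fig.oj) = Fig.fsup Fig.zi (J Fig.zk) := h.K10 Fig.zi Fig.oj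
  rw [h12] at h10
  cases hoj : J Fig.oj <;> rw [hoj] at h11 h9 h10 <;> revert h11 h9 h10 <;> decide
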